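/- arXiv:2202.08012 — 2 statements merged into one kernel-verified Lean document; each statement's English description precedes it below -/
import Mathlib

section
/- Let K be a number field of degree n over ℚ and let u ∈ K satisfy [ℚ(u):ℚ] = n (so the n embeddings of K into ℂ take pairwise distinct values at u). Suppose σ_a, σ_b, σ_c, σ_d : K → ℂ are embeddings with σ_a ∉ {σ_c, σ_d} and σ_a(u)·σ_b(u) = σ_c(u)·σ_d(u). Then for every embedding ρ : K → ℂ there exist embeddings τ_b, τ_c, τ_d : K → ℂ with τ_c ≠ ρ and τ_d ≠ ρ such that ρ(u)·τ_b(u) = τ_c(u)·τ_d(u). -/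
/-- Let `K` be a number field of degree `n` and `u ∈ K` of degree `n` over `ℚ`.
If `σa σb σc σd : K →+* ℂ` are embeddings with `σa ∉ {σc, σd}` and
`σa u * σb u = σc u * σd u`, then for every embedding `ρ : K →+* ℂ` there are
embeddings `τb τc τd` with `τc ≠ ρ`, `τd ≠ ρ` and `ρ u * τb u = τc u * τd u`. -/
theorem exists_transported_multiplicative_relation
    (K : Type*) [Field K] [NumberField K] (n : ℕ)
    (hK : Module.finrank ℚ K = n) (u : K)
    (hu : Module.finrank ℚ (IntermediateField.adjoin ℚ {u}) = n)
    (σa σb σc σd : K →+* ℂ) (hac : σa ≠ σc) (had : σa ≠ σd)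
    (hrel : σa u * σb u = σc u * σd u) :
    ∀ ρ : K →+* ℂ, ∃ τb τc τd : K →+* ℂ,
      τc ≠ ρ ∧ τd ≠ ρ ∧ ρ u * τb u = τc u * τd u := by
  open IntermediateField Polynomial in
  intro ρ
  have hint : IsIntegral ℚ u := IsIntegral.of_finite ℚ u
  -- `u` generates `K` over `ℚ`
  have htop : IntermediateField.adjoin ℚ {u} = ⊤ := by
    have h1 : Subalgebra.toSubmodule (IntermediateField.adjoin ℚ {u}).toSubalgebra = ⊤ :=
      Submodule.eq_top_of_finrank_eq (by rw [hK]; exact hu)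
    ext x
    simp only [IntermediateField.mem_top, iff_true]
    have : x ∈ (⊤ : Submodule ℚ K) := trivial
    rw [← h1] at this
    exact this
  have halg : Algebra.adjoin ℚ ({u} : Set K) = ⊤ := by
    have h2 := IntermediateField.adjoin_simple_toSubalgebra_of_isAlgebraic (F := ℚ) hint.isAlgebraic
    rw [show (ℚ⟮u⟯ : IntermediateField ℚ K) = IntermediateField.adjoin ℚ {u} from rfl, htop,
      IntermediateField.top_toSubalgebra] at h2
    exact h2.symm
  -- embeddings are determined by their value at `u`
  have key : ∀ σ τ : K →+* ℂ, σ u = τ u → σ = τ := by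
    intro σ τ h
    have := AlgHom.ext_of_adjoin_eq_top (R := ℚ) halg
      (φ₁ := σ.toRatAlgHom) (φ₂ := τ.toRatAlgHom)
      (by intro x hx; rcases hx with rfl; exact h)
    have h2 := congrArg AlgHom.toRingHom this
    simpa using h2
  -- work inside the algebraic closure of `ℚ` in `ℂ`, which is normal over `ℚ`
  set L : IntermediateField ℚ ℂ := algebraicClosure ℚ ℂ with hL
  have hmem : ∀ (σ : K →+* ℂ) (x : K), σ x ∈ L := by
    intro σ x
    rw [hL, mem_algebraicClosure_iff']
    exact (IsIntegral.of_finite ℚ x).map σ.toRatAlgHom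
  -- restricted homs `K →ₐ[ℚ] L`
  let S : (K →+* ℂ) → (K →ₐ[ℚ] L) := fun σ =>
    σ.toRatAlgHom.codRestrict L.toSubalgebra (hmem σ)
  have hS : ∀ (σ : K →+* ℂ) (x : K), (S σ x : ℂ) = σ x := fun σ x => rfl
  -- the minpoly of `ρ u` (in `L`) has `σa u` as a root
  have hminL : ∀ σ : K →+* ℂ, minpoly ℚ (S σ u) = minpoly ℚ u := by
    intro σ
    have h1 : minpoly ℚ ((algebraMap L ℂ) (S σ u)) = minpoly ℚ (S σ u) :=
      minpoly.algebraMap_eq (algebraMap L ℂ).injective _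
    have h2 : minpoly ℚ (σ u) = minpoly ℚ u :=
      minpoly.algHom_eq σ.toRatAlgHom σ.injective u
    rw [← h2, ← h1]; rfl
  have hev : (Polynomial.aeval (S σa u)) (minpoly ℚ (S ρ u)) = 0 := by
    rw [hminL ρ]
    apply (algebraMap L ℂ).injective
    rw [map_zero, ← Polynomial.aeval_algebraMap_apply]
    have : (algebraMap L ℂ) (S σa u) = σa u := rfl
    rw [this]
    show (Polynomial.aeval (σa.toRatAlgHom u)) (minpoly ℚ u) = 0
    rw [Polynomial.aeval_algHom_apply σa.toRatAlgHom u, minpoly.aeval, map_zero]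
  haveI : Algebra.IsAlgebraic ℚ L := algebraicClosure.isAlgebraic ℚ ℂ
  haveI : Normal ℚ L := @IsAlgClosure.normal ℚ (algebraicClosure ℚ ℂ) _ _ _ (algebraicClosure.isAlgClosure ℚ ℂ)
  have halgL : IsAlgebraic ℚ (S ρ u) := Algebra.IsAlgebraic.isAlgebraic _
  -- a `ℚ`-automorphism of `L` carrying `σa u` to `ρ u`
  obtain ⟨φ, hφ⟩ := minpoly.exists_algEquiv_of_root (K := ℚ) (L := L) halgL hev
  -- the transported embeddings
  let T : (K →+* ℂ) → (K →+* ℂ) := fun σ =>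
    (L.val.comp (φ.toAlgHom.comp (S σ))).toRingHom
  have hT : ∀ (σ : K →+* ℂ) (x : K), T σ x = (φ (S σ x) : ℂ) := fun σ x => rfl
  have hTa : T σa u = ρ u := by rw [hT, hφ]; rfl
  have evalne : ∀ σ : K →+* ℂ, T σ = ρ → σ = σa := by
    intro σ hσ
    apply key
    have e : ((φ (S σ u)) : ℂ) = ((φ (S σa u)) : ℂ) := by
      rw [← hT, hσ, ← hTa, hT]
    exact congrArg Subtype.val (φ.injective (Subtype.coe_injective e))
  refine ⟨T σb, T σc, T σd, ?_, ?_, ?_⟩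
  · exact fun h => hac (evalne σc h).symm
  · exact fun h => had (evalne σd h).symm
  · have : S σa u * S σb u = S σc u * S σd u := Subtype.ext (by
      push_cast [hS]; exact_mod_cast hrel)
    calc ρ u * T σb u = (φ (S σa u) : ℂ) * (φ (S σb u) : ℂ) := by rw [← hTa, hT, hT]
      _ = ((φ (S σa u * S σb u) : L) : ℂ) := by rw [map_mul]; rfl
      _ = ((φ (S σc u * S σd u) : L) : ℂ) := by rw [this]
      _ = T σc u * T σd u := by rw [map_mul]; rfl
end

section
/- Let s ≥ 1 and t ≥ 1 be integers and let j', k', l' be indices in {2, …, s+t}. Then the linear subspace of ℝ^{s+t} defined by the equations x_1 + … + x_s + 2x_{s+1} + … + 2x_{s+t} = 0, x_{s+1} = x_{s+2} = … = x_{s+t}, and x_1 + x_{j'} = x_{k'} + x_{l'} has dimension s − 1. Equivalently, the linear functional x_1 + x_{j'} − x_{k'} − x_{l'} does not vanish identically on the s-dimensional subspace cut out by the first two families of equations. -/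
/-- Total extension of a vector in `ℝ^(s+t)` to a function on `ℕ`. -/
private def extFun (s t : ℕ) (x : Fin (s + t) → ℝ) : ℕ → ℝ :=
  fun m => if h : m < s + t then x ⟨m, h⟩ else 0

private lemma extFun_eq (s t : ℕ) (x : Fin (s + t) → ℝ) (m : ℕ) (hm : m < s + t) :
    extFun s t x m = x ⟨m, hm⟩ := dif_pos hm

private lemma sumsplit (s t : ℕ) (hs : 1 ≤ s) (x : Fin (s + t) → ℝ) :
    (∑ i : Fin (s + t), (if (i : ℕ) < s then x i else 2 * x i)) =
    ((∑ m ∈ Finset.range (s - 1), extFun s t x (m + 1)) + extFun s t x 0)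
      + ∑ m ∈ Finset.range t, 2 * extFun s t x (s + m) := by
  have hX : ∀ i : Fin (s + t),
      (if (i : ℕ) < s then x i else 2 * x i) =
      (fun m => if m < s then extFun s t x m else 2 * extFun s t x m) (i : ℕ) := by
    intro i
    simp [extFun, i.isLt]
  rw [Finset.sum_congr rfl (fun i _ => hX i),
    Fin.sum_univ_eq_sum_range (fun m => if m < s then extFun s t x m else 2 * extFun s t x m)
      (s + t),
    ← Finset.sum_range_add_sum_Ico _ (Nat.le_add_right s t),
    Finset.sum_Ico_eq_sum_range]

  congr 1
  · obtain ⟨s', rfl⟩ : ∃ s', s = s' + 1 := ⟨s - 1, by omega⟩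
    rw [Finset.sum_range_succ']
    congr 1
    · refine Finset.sum_congr rfl fun m hm => ?_
      simp only [Finset.mem_range] at hm
      rw [if_pos (by omega)]
  · simp only [Nat.add_sub_cancel_left]
    refine Finset.sum_congr rfl fun m hm => ?_
    simp only [Finset.mem_range] at hm
    rw [if_neg (by omega)]

/-- For `s ≥ 1`, `t ≥ 1` and indices `j', k', l' ∈ {2, …, s+t}` (here `0`-indexed, so
with index value `≥ 1`), the subspace of `ℝ^(s+t)` cut out by the Dirichlet equation
`x₁ + ⋯ + x_s + 2x_{s+1} + ⋯ + 2x_{s+t} = 0`, the equations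
`x_{s+1} = ⋯ = x_{s+t}`, and the extra equation `x₁ + x_{j'} = x_{k'} + x_{l'}`,
has dimension `s - 1`. -/
theorem dirichlet_subspace_with_extra_relation_dim
    (s t : ℕ) (hs : 1 ≤ s) (ht : 1 ≤ t)
    (j' k' l' : Fin (s + t)) (hj : 1 ≤ (j' : ℕ)) (hk : 1 ≤ (k' : ℕ)) (hl : 1 ≤ (l' : ℕ))
    (W : Submodule ℝ (Fin (s + t) → ℝ))
    (hW : ∀ x : Fin (s + t) → ℝ, x ∈ W ↔
      (∑ i : Fin (s + t), (if (i : ℕ) < s then x i else 2 * x i)) = 0 ∧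
      (∀ i j : Fin (s + t), s ≤ (i : ℕ) → s ≤ (j : ℕ) → x i = x j) ∧
      x ⟨0, by omega⟩ + x j' = x k' + x l') :
    Module.finrank ℝ W = s - 1 := by
  classical
  have htR : (1 : ℝ) ≤ (t : ℝ) := by exact_mod_cast ht
  -- the "is this a tail index" indicator
  obtain ⟨ε, hε⟩ : ∃ ε : ℕ → ℝ, ε = fun m => if m < s then 0 else 1 := ⟨_, rfl⟩
  obtain ⟨d, hd⟩ : ∃ d : ℝ, d = 2 * t - ε j' + ε k' + ε l' := ⟨_, rfl⟩
  have hdpos : 0 < d := by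
    by_cases e1 : (j' : ℕ) < s <;> by_cases e2 : (k' : ℕ) < s <;>
      by_cases e3 : (l' : ℕ) < s <;>
      simp only [hd, hε, e1, e2, e3, if_true, if_false] <;> linarith
  -- projection onto coordinates 1, …, s-1
  let π : W →ₗ[ℝ] (Fin (s - 1) → ℝ) :=
    { toFun := fun x i => (x : Fin (s + t) → ℝ) ⟨(i : ℕ) + 1, by omega⟩
      map_add' := fun a b => rfl
      map_smul' := fun r a => rfl }
  -- injectivity of π
  have h0 : ∀ x : W, π x = 0 → x = 0 := by
    rintro ⟨x, hx⟩ h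
    rw [hW] at hx
    obtain ⟨h1, h2, h3⟩ := hx
    have hzero : ∀ m (hm : m < s + t), 1 ≤ m → m < s → x ⟨m, hm⟩ = 0 := by
      intro m hm h1m h2m
      have := congrFun h ⟨m - 1, by omega⟩
      simp only [π, LinearMap.coe_mk, AddHom.coe_mk, Pi.zero_apply] at this
      simp only [show m - 1 + 1 = m from by omega] at this
      exact this
    obtain ⟨c, hc⟩ : ∃ c : ℝ, c = x ⟨s, by omega⟩ := ⟨_, rfl⟩
    have htail : ∀ m (hm : m < s + t), s ≤ m → x ⟨m, hm⟩ = c :=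
      fun m hm hsm => by rw [hc]; exact h2 ⟨m, hm⟩ ⟨s, by omega⟩ hsm (le_refl s)
    rw [sumsplit s t hs] at h1
    have hmid : (∑ m ∈ Finset.range (s - 1), extFun s t x (m + 1)) = 0 := by
      refine Finset.sum_eq_zero fun m hm => ?_
      simp only [Finset.mem_range] at hm
      rw [extFun_eq s t x (m + 1) (by omega)]
      exact hzero _ _ (by omega) (by omega)
    have htailsum : (∑ m ∈ Finset.range t, 2 * extFun s t x (s + m)) = 2 * t * c := by
      have heach : ∀ m ∈ Finset.range t, 2 * extFun s t x (s + m) = 2 * c := by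
        intro m _
        rw [extFun_eq s t x (s + m) (by simp only [Finset.mem_range] at *; omega)]
        rw [htail (s + m) _ (by omega)]
      rw [Finset.sum_congr rfl heach, Finset.sum_const, nsmul_eq_mul, Finset.card_range]
      ring
    rw [hmid, htailsum, extFun_eq s t x 0 (by omega), zero_add] at h1
    -- the extra relation
    have hval : ∀ (i : Fin (s + t)), 1 ≤ (i : ℕ) → x i = ε (i : ℕ) * c := by
      intro i hi
      by_cases h' : (i : ℕ) < s
      · rw [hε]; simp only [h', if_true]
        rw [zero_mul]; exact hzero i i.isLt hi h'
      · rw [hε]; simp only [h', if_false]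
        rw [one_mul]; exact htail i i.isLt (by omega)
    rw [hval j' hj, hval k' hk, hval l' hl] at h3
    have hx0 : x ⟨0, by omega⟩ = -(2 * t * c) := by linarith
    rw [hx0] at h3
    have key : c * d = 0 := by rw [hd]; linear_combination -h3
    have hcz : c = 0 := by
      rcases mul_eq_zero.mp key with h' | h'
      · exact h'
      · exact absurd h' (ne_of_gt hdpos)
    have hx00 : x ⟨0, by omega⟩ = 0 := by rw [hx0, hcz]; ring
    apply Subtype.ext
    funext i
    show x i = 0
    rcases Nat.lt_or_ge (i : ℕ) s with h' | h'
    · rcases Nat.eq_zero_or_pos (i : ℕ) with h'' | h''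
      · have hi0 : i = ⟨0, by omega⟩ := by apply Fin.ext; exact h''
        rw [hi0, hx00]
      · exact hzero i i.isLt h'' h'
    · rw [htail i i.isLt h', hcz]
  -- surjectivity of π
  have hsurj : Function.Surjective π := by
    intro y
    obtain ⟨Y, hY⟩ : ∃ Y : ℕ → ℝ, Y = fun m => if h : m < s - 1 then y ⟨m, h⟩ else 0 :=
      ⟨_, rfl⟩
    obtain ⟨S, hS⟩ : ∃ S : ℝ, S = ∑ m ∈ Finset.range (s - 1), Y m := ⟨_, rfl⟩
    obtain ⟨a, ha⟩ : ∃ a : ℕ → ℝ, a = fun m => if m < s then Y (m - 1) else 0 := ⟨_, rfl⟩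
    obtain ⟨c, hcdef⟩ : ∃ c : ℝ, c = (-S + a j' - a k' - a l') / d := ⟨_, rfl⟩
    have hceq : d * c = -S + a j' - a k' - a l' := by
      rw [hcdef, mul_div_cancel₀ _ (ne_of_gt hdpos)]
    rw [hd] at hceq
    obtain ⟨x0, hx0⟩ : ∃ x0 : ℝ, x0 = -S - 2 * t * c := ⟨_, rfl⟩
    obtain ⟨x, hxdef⟩ : ∃ x : Fin (s + t) → ℝ, x = fun i : Fin (s + t) =>
      if (i : ℕ) = 0 then x0 else if (i : ℕ) < s then Y ((i : ℕ) - 1) else c := ⟨_, rfl⟩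
    have hxval : ∀ (i : Fin (s + t)), 1 ≤ (i : ℕ) →
        x i = a (i : ℕ) + ε (i : ℕ) * c := by
      intro i hi
      have hne : ¬ ((i : ℕ) = 0) := by omega
      by_cases h' : (i : ℕ) < s
      · simp only [hxdef]; simp only [hne, if_false, h', if_true]
        rw [ha, hε]; simp only [h', if_true]; ring
      · simp only [hxdef]; simp only [hne, if_false, h', if_false]
        rw [ha, hε]; simp only [h', if_false]; ring
    have hx00 : x ⟨0, by omega⟩ = x0 := by simp [hxdef]
    have hxmem : x ∈ W := by
      rw [hW]
      refine ⟨?_, ?_, ?_⟩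
      · rw [sumsplit s t hs]
        have hmid : (∑ m ∈ Finset.range (s - 1), extFun s t x (m + 1)) = S := by
          rw [hS]
          refine Finset.sum_congr rfl fun m hm => ?_
          simp only [Finset.mem_range] at hm
          rw [extFun_eq s t x (m + 1) (by omega)]
          simp only [hxdef]
          simp only [if_neg (show ¬ (m + 1 = 0) by omega), if_pos (show m + 1 < s by omega),
            Nat.add_sub_cancel]
        have htailsum : (∑ m ∈ Finset.range t, 2 * extFun s t x (s + m)) = 2 * t * c := by
          have heach : ∀ m ∈ Finset.range t, 2 * extFun s t x (s + m) = 2 * c := by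
            intro m hm
            simp only [Finset.mem_range] at hm
            rw [extFun_eq s t x (s + m) (by omega)]
            simp only [hxdef]
            simp only [if_neg (show ¬ (s + m = 0) by omega),
              if_neg (show ¬ (s + m < s) by omega)]
          rw [Finset.sum_congr rfl heach, Finset.sum_const, nsmul_eq_mul, Finset.card_range]
          ring
        rw [hmid, htailsum, extFun_eq s t x 0 (by omega), hx00, hx0]
        ring
      · intro i j hi hj
        simp only [hxdef]
        simp only [if_neg (show ¬ ((i : ℕ) = 0) by omega),
          if_neg (show ¬ ((i : ℕ) < s) by omega),
          if_neg (show ¬ ((j : ℕ) = 0) by omega),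
          if_neg (show ¬ ((j : ℕ) < s) by omega)]
      · rw [hx00, hxval j' hj, hxval k' hk, hxval l' hl, hx0]
        linear_combination -hceq
    refine ⟨⟨x, hxmem⟩, ?_⟩
    funext i
    show x ⟨(i : ℕ) + 1, by omega⟩ = y i
    simp only [hxdef]
    simp only [if_neg (show ¬ ((i : ℕ) + 1 = 0) by omega),
      if_pos (show (i : ℕ) + 1 < s from by omega), Nat.add_sub_cancel]
    simp only [hY]
    simp only [dif_pos i.isLt]
  have hinj : Function.Injective π :=
    LinearMap.ker_eq_bot.mp (LinearMap.ker_eq_bot'.mpr h0)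
  have e := LinearEquiv.ofBijective π ⟨hinj, hsurj⟩
  rw [e.finrank_eq]
  simp [Module.finrank_pi]
end
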